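/- A metric space X is complete if and only if for every uniformly continuous map f : S → X there exists a uniformly continuous map g : S₀ → X whose restriction to S equals f, where S = {1/(n+1) : n ∈ ℕ} and S₀ = S ∪ {0} are equipped with the metric induced from the real line. -/

import Mathlib

/-- The subset `{1/(n+1) : n ∈ ℕ}` of the real line. -/
def seqSet : Set ℝ := {x | ∃ n : ℕ, x = 1 / (n + 1)}

/-- The subset `{1/(n+1) : n ∈ ℕ} ∪ {0}` of the real line. -/
def seqSet₀ : Set ℝ := seqSet ∪ {0}

lemma one_div_succ_inj {m n : ℕ} (h : (1 : ℝ) / (m + 1) = 1 / (n + 1)) : m = n := by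
  have hm : ((m : ℝ) + 1) ≠ 0 := by positivity
  have hn : ((n : ℝ) + 1) ≠ 0 := by positivity
  field_simp at h
  exact_mod_cast add_right_cancel (h.symm : (m : ℝ) + 1 = n + 1)

lemma seq_gap {m n N : ℕ} (hm : m ≤ N) (hlt : m < n) :
    1 / (((N : ℝ) + 1) * ((N : ℝ) + 2)) ≤ 1 / ((m : ℝ) + 1) - 1 / ((n : ℝ) + 1) := by
  have h1 : (1 : ℝ) / ((n : ℝ) + 1) ≤ 1 / ((m : ℝ) + 2) := by
    apply one_div_le_one_div_of_le
    · positivity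
    · have : (m : ℝ) + 1 ≤ (n : ℝ) := by exact_mod_cast hlt
      linarith
  have h2 : (1 : ℝ) / ((m : ℝ) + 1) - 1 / ((m : ℝ) + 2)
      = 1 / (((m : ℝ) + 1) * ((m : ℝ) + 2)) := by
    field_simp
    ring
  have h3 : (1 : ℝ) / (((N : ℝ) + 1) * ((N : ℝ) + 2))
      ≤ 1 / (((m : ℝ) + 1) * ((m : ℝ) + 2)) := by
    apply one_div_le_one_div_of_le
    · positivity
    · have : (m : ℝ) ≤ (N : ℝ) := by exact_mod_cast hm
      nlinarith
  linarith

/-- A metric space `X` is complete iff every uniformly continuous map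
`{1/(n+1) : n ∈ ℕ} → X` extends to a uniformly continuous map on
`{1/(n+1) : n ∈ ℕ} ∪ {0}` (metrics induced from the real line). -/
theorem stmt11 {X : Type*} [MetricSpace X] :
    CompleteSpace X ↔
      ∀ f : seqSet → X, UniformContinuous f →
        ∃ g : seqSet₀ → X, UniformContinuous g ∧
          g ∘ Set.inclusion Set.subset_union_left = f := by
  have hmem : ∀ n : ℕ, (1 : ℝ) / (n + 1) ∈ seqSet := fun n => ⟨n, rfl⟩
  have h0 : (0 : ℝ) ∈ seqSet₀ := Or.inr rfl
  constructor
  · intro hX f hf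
    set e : seqSet → seqSet₀ := Set.inclusion Set.subset_union_left with he
    have hiso : Isometry e := Isometry.of_dist_eq fun x y => rfl
    have hind : IsUniformInducing e := hiso.isUniformInducing
    have hdense : DenseRange e := by
      intro z
      rcases z with ⟨x, hx | hx⟩
      · exact subset_closure ⟨⟨x, hx⟩, rfl⟩
      · rw [Set.mem_singleton_iff] at hx
        subst hx
        have ht : Filter.Tendsto
            (fun n : ℕ => e ⟨1 / (n + 1), hmem n⟩) Filter.atTop (nhds ⟨0, h0⟩) := by
          rw [tendsto_subtype_rng]
          exact tendsto_one_div_add_atTop_nhds_zero_nat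
        exact mem_closure_of_tendsto ht (Filter.Eventually.of_forall fun n => ⟨_, rfl⟩)
    refine ⟨(hind.isDenseInducing hdense).extend f,
      uniformContinuous_uniformly_extend hind hdense hf, funext fun x => ?_⟩
    exact uniformly_extend_of_ind hind hdense hf x
  · intro H
    apply Metric.complete_of_cauchySeq_tendsto
    intro u hu
    let idx : seqSet → ℕ := fun s => s.2.choose
    have hidx : ∀ s : seqSet, (s : ℝ) = 1 / (idx s + 1) := fun s => s.2.choose_spec
    let f : seqSet → X := fun s => u (idx s)
    have hf : UniformContinuous f := by
      rw [Metric.uniformContinuous_iff]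
      intro ε hε
      obtain ⟨N, hN⟩ := Metric.cauchySeq_iff.mp hu ε hε
      refine ⟨1 / (((N : ℝ) + 1) * ((N : ℝ) + 2)), by positivity, ?_⟩
      intro x y hxy
      have hd : dist x y = |1 / ((idx x : ℝ) + 1) - 1 / ((idx y : ℝ) + 1)| := by
        rw [Subtype.dist_eq, Real.dist_eq, ← hidx x, ← hidx y]
      have hgap : ∀ p q : ℕ, p < q →
          |1 / ((p : ℝ) + 1) - 1 / ((q : ℝ) + 1)| < 1 / (((N : ℝ) + 1) * ((N : ℝ) + 2)) →
          N < p := by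
        intro p q hpq hlt
        by_contra hc
        push_neg at hc
        have hg := seq_gap hc hpq
        have hpos : (0 : ℝ) ≤ 1 / ((p : ℝ) + 1) - 1 / ((q : ℝ) + 1) := by
          have := (seq_gap hc hpq)
          have : (0 : ℝ) < 1 / (((N : ℝ) + 1) * ((N : ℝ) + 2)) := by positivity
          linarith
        rw [abs_of_nonneg hpos] at hlt
        linarith
      rcases lt_trichotomy (idx x) (idx y) with hab | hab | hab
      · have h1 : N < idx x := hgap _ _ hab (hd ▸ hxy)
        exact hN (idx x) (le_of_lt h1) (idx y) (le_of_lt (h1.trans hab))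
      · simp only [f, hab]
        simpa using hε
      · have h1 : N < idx y := by
          apply hgap _ _ hab
          rw [abs_sub_comm, ← hd]
          exact hxy
        exact hN (idx x) (le_of_lt (h1.trans hab)) (idx y) (le_of_lt h1)
    obtain ⟨g, hg, hge⟩ := H f hf
    refine ⟨g ⟨0, h0⟩, ?_⟩
    have hseq : Filter.Tendsto
        (fun n : ℕ => (⟨1 / (n + 1), Or.inl (hmem n)⟩ : seqSet₀)) Filter.atTop
        (nhds ⟨0, h0⟩) := by
      rw [tendsto_subtype_rng]
      exact tendsto_one_div_add_atTop_nhds_zero_nat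
    have ht := (hg.continuous.tendsto _).comp hseq
    have heq : ∀ n : ℕ, g ⟨1 / (n + 1), Or.inl (hmem n)⟩ = u n := by
      intro n
      have h1 : g ⟨1 / (n + 1), Or.inl (hmem n)⟩ = f ⟨1 / (n + 1), hmem n⟩ :=
        congrFun hge ⟨1 / (n + 1), hmem n⟩
      have h2 : idx ⟨1 / (n + 1), hmem n⟩ = n :=
        (one_div_succ_inj (hidx ⟨1 / (n + 1), hmem n⟩).symm)
      rw [h1]
      simp only [f, h2]
    convert ht using 1
    funext n
    exact (heq n).symm
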